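/- Let W ∈ ℝ^{N×N} be symmetric, nonnegative and doubly stochastic with associated connected graph, t ≥ 1 an integer, L_t := 1 − σ_N(W^t) with σ_N(W^t) the smallest eigenvalue of W^t. Let 𝐗 = (X_1,…,X_N) ∈ St(n,r)^N belong to the local region S (with constants δ₂ ≤ 1/6, δ₁ ≤ δ₂/(5√r)), let X̂ be its induced arithmetic mean, and set Φ := 2 − max_{i} ‖X_i − X̂‖_F² (so Φ ≥ 1). Then Σ_{i=1}^N ⟨X_i − X̂, grad_{X_i} h_t(𝐗)⟩ ≥ (Φ/(2L_t)) Σ_{i=1}^N ‖grad_{X_i} h_t(𝐗)‖_F². -/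

import Mathlib

open Matrix
open scoped BigOperators

noncomputable section

/-- the Frobenius norm of a real matrix -/
def frob {n r : ℕ} (A : Matrix (Fin n) (Fin r) ℝ) : ℝ :=
  Real.sqrt (∑ i, ∑ j, (A i j) ^ 2)

/-- the trace inner product ⟨A,B⟩ = tr(AᵀB) -/
def innerF {n r : ℕ} (A B : Matrix (Fin n) (Fin r) ℝ) : ℝ := (Aᵀ * B).trace

/-- the Stiefel manifold St(n,r) -/
def Stiefel (n r : ℕ) : Set (Matrix (Fin n) (Fin r) ℝ) := {X | Xᵀ * X = 1}

/-- orthogonal projection onto the tangent space at X -/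
def projT {n r : ℕ} (X Y : Matrix (Fin n) (Fin r) ℝ) : Matrix (Fin n) (Fin r) ℝ :=
  Y - (1 / 2 : ℝ) • (X * (Xᵀ * Y + Yᵀ * X))

/-- the induced arithmetic mean (IAM) on the Stiefel manifold -/
def IsIAM {n r N : ℕ} (Xs : Fin N → Matrix (Fin n) (Fin r) ℝ)
    (Xhat : Matrix (Fin n) (Fin r) ℝ) : Prop :=
  Xhat ∈ Stiefel n r ∧
    ∀ Y ∈ Stiefel n r, ∑ i, frob (Xhat - Xs i) ^ 2 ≤ ∑ i, frob (Y - Xs i) ^ 2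

/-- the smallest eigenvalue of a (symmetric) square matrix, via the Rayleigh quotient -/
def minEig {N : ℕ} (A : Matrix (Fin N) (Fin N) ℝ) : ℝ :=
  sInf {c | ∃ x : EuclideanSpace ℝ (Fin N), ‖x‖ = 1 ∧
    c = inner ℝ x (Matrix.toEuclideanLin A x)}

/-- the communication graph induced by the weight matrix W -/
def commGraph {N : ℕ} (W : Matrix (Fin N) (Fin N) ℝ) : SimpleGraph (Fin N) where
  Adj i j := i ≠ j ∧ (0 < W i j ∨ 0 < W j i)
  symm := ⟨fun i j h => ⟨h.1.symm, h.2.symm⟩⟩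
  loopless := ⟨fun i h => h.1 rfl⟩

/-- the Riemannian gradient of the local consensus potential
`h_{i,t}(𝐗) = (1/2)Σ_j (Wᵗ)_{ij}‖X_i − X_j‖_F²`,
namely `grad h_{i,t}(𝐗) = P_{T_{X_i}}(X_i − Σ_j (Wᵗ)_{ij} X_j)`. -/
def gradh {n r N : ℕ} (W : Matrix (Fin N) (Fin N) ℝ) (t : ℕ)
    (Xs : Fin N → Matrix (Fin n) (Fin r) ℝ) (i : Fin N) : Matrix (Fin n) (Fin r) ℝ :=
  projT (Xs i) (Xs i - ∑ j, (W ^ t) i j • Xs j)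

/-- membership in the local region 𝒮 = 𝒮₁ ∩ 𝒮₂ of Definition 12 -/
def inS {n r N : ℕ} (δ₁ δ₂ : ℝ) (Xs : Fin N → Matrix (Fin n) (Fin r) ℝ)
    (Xhat : Matrix (Fin n) (Fin r) ℝ) : Prop :=
  (∀ i, Xs i ∈ Stiefel n r) ∧ (∑ i, frob (Xs i - Xhat) ^ 2 ≤ N * δ₁ ^ 2) ∧
    (∀ i, frob (Xs i - Xhat) ≤ δ₂)

namespace Aux
variable {n r m k : ℕ}

lemma innerF_eq_sum (A B : Matrix (Fin n) (Fin r) ℝ) :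
    innerF A B = ∑ a, ∑ b, A a b * B a b := by
  simp [innerF, Matrix.trace, Matrix.diag, Matrix.mul_apply, Matrix.transpose_apply]
  exact Finset.sum_comm

lemma innerF_self (A : Matrix (Fin n) (Fin r) ℝ) :
    innerF A A = ∑ a, ∑ b, (A a b) ^ 2 := by
  rw [innerF_eq_sum]; simp [sq]

lemma innerF_self_nonneg (A : Matrix (Fin n) (Fin r) ℝ) : 0 ≤ innerF A A := by
  rw [innerF_self]
  exact Finset.sum_nonneg fun a _ => Finset.sum_nonneg fun b _ => sq_nonneg _

lemma frob_eq_sqrt (A : Matrix (Fin n) (Fin r) ℝ) : frob A = Real.sqrt (innerF A A) := by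
  rw [frob, innerF_self]

lemma frob_nonneg (A : Matrix (Fin n) (Fin r) ℝ) : 0 ≤ frob A := Real.sqrt_nonneg _

lemma frob_sq (A : Matrix (Fin n) (Fin r) ℝ) : frob A ^ 2 = innerF A A := by
  rw [frob_eq_sqrt, Real.sq_sqrt (innerF_self_nonneg A)]

lemma innerF_comm (A B : Matrix (Fin n) (Fin r) ℝ) : innerF A B = innerF B A := by
  rw [innerF_eq_sum, innerF_eq_sum]
  congr 1; funext a; congr 1; funext b; ring

lemma innerF_sub_left (A B C : Matrix (Fin n) (Fin r) ℝ) :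
    innerF (A - B) C = innerF A C - innerF B C := by
  simp [innerF_eq_sum, Matrix.sub_apply, sub_mul, Finset.sum_sub_distrib]

lemma innerF_sub_right (A B C : Matrix (Fin n) (Fin r) ℝ) :
    innerF A (B - C) = innerF A B - innerF A C := by
  simp [innerF_eq_sum, Matrix.sub_apply, mul_sub, Finset.sum_sub_distrib]

lemma innerF_smul_right (c : ℝ) (A B : Matrix (Fin n) (Fin r) ℝ) :
    innerF A (c • B) = c * innerF A B := by
  simp [innerF_eq_sum, Finset.mul_sum, Matrix.smul_apply, smul_eq_mul]
  congr 1; funext a; congr 1; funext b; ring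

lemma innerF_sum_right {ι : Type*} (s : Finset ι) (A : Matrix (Fin n) (Fin r) ℝ)
    (f : ι → Matrix (Fin n) (Fin r) ℝ) :
    innerF A (∑ j ∈ s, f j) = ∑ j ∈ s, innerF A (f j) := by
  classical
  induction s using Finset.induction_on with
  | empty => simp [innerF_eq_sum]
  | @insert a s h ih =>
      rw [Finset.sum_insert h, Finset.sum_insert h, ← ih]
      simp [innerF_eq_sum, Matrix.add_apply, mul_add, Finset.sum_add_distrib]

-- Cauchy-Schwarz
lemma innerF_le_frob_mul_frob (A B : Matrix (Fin n) (Fin r) ℝ) :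
    innerF A B ≤ frob A * frob B := by
  have h1 : innerF A B = ∑ p : Fin n × Fin r, A p.1 p.2 * B p.1 p.2 := by
    rw [innerF_eq_sum, ← Finset.sum_product']; rfl
  have h2 : innerF A A = ∑ p : Fin n × Fin r, (A p.1 p.2) ^ 2 := by
    rw [innerF_self, ← Finset.sum_product']; rfl
  have h3 : innerF B B = ∑ p : Fin n × Fin r, (B p.1 p.2) ^ 2 := by
    rw [innerF_self, ← Finset.sum_product']; rfl
  have cs := Finset.sum_mul_sq_le_sq_mul_sq Finset.univ
    (fun p : Fin n × Fin r => A p.1 p.2) (fun p => B p.1 p.2)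
  have h4 : (innerF A B) ^ 2 ≤ (frob A * frob B) ^ 2 := by
    rw [h1, mul_pow, frob_sq, frob_sq, h2, h3]; exact cs
  exact le_of_sq_le_sq h4 (mul_nonneg (frob_nonneg A) (frob_nonneg B))


lemma key_trace (X Y Z : Matrix (Fin n) (Fin r) ℝ) :
    (Zᵀ * (X * (Yᵀ * X))).trace = (Xᵀ * (Z * (Xᵀ * Y))).trace := by
  have h1 : (Zᵀ * (X * (Yᵀ * X))).trace = ((Zᵀ * X) * (Yᵀ * X)).trace := by
    rw [Matrix.mul_assoc]
  have h2 : ((Zᵀ * X) * (Yᵀ * X)).trace = ((Yᵀ * X) * (Zᵀ * X)).trace :=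
    Matrix.trace_mul_comm _ _
  have h3 : ((Yᵀ * X) * (Zᵀ * X)).trace = (((Yᵀ * X) * (Zᵀ * X))ᵀ).trace :=
    (Matrix.trace_transpose _).symm
  have h4 : (((Yᵀ * X) * (Zᵀ * X))ᵀ) = (Xᵀ * Z) * (Xᵀ * Y) := by
    rw [Matrix.transpose_mul, Matrix.transpose_mul, Matrix.transpose_mul,
      Matrix.transpose_transpose, Matrix.transpose_transpose]
  rw [h1, h2, h3, h4, Matrix.mul_assoc]

lemma projT_selfadj (X Y Z : Matrix (Fin n) (Fin r) ℝ) :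
    innerF Z (projT X Y) = innerF (projT X Z) Y := by
  simp only [projT, innerF, Matrix.transpose_sub, Matrix.sub_mul, Matrix.mul_sub,
    Matrix.trace_sub, Matrix.transpose_smul, Matrix.smul_mul, Matrix.mul_smul,
    Matrix.trace_smul, smul_eq_mul]
  congr 1
  congr 1
  simp only [Matrix.mul_add, Matrix.add_mul, Matrix.transpose_add, Matrix.trace_add]
  rw [key_trace X Y Z]
  have h2 : ((X * (Xᵀ * Z))ᵀ * Y).trace = (Zᵀ * (X * (Xᵀ * Y))).trace := by
    rw [Matrix.transpose_mul, Matrix.transpose_mul, Matrix.transpose_transpose,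
      Matrix.mul_assoc]
    rw [← Matrix.mul_assoc Zᵀ]
  have h3 : ((X * (Zᵀ * X))ᵀ * Y).trace = (Xᵀ * (Z * (Xᵀ * Y))).trace := by
    rw [Matrix.transpose_mul, Matrix.transpose_mul, Matrix.transpose_transpose,
      Matrix.mul_assoc, Matrix.mul_assoc]
  rw [h2, h3]

lemma projT_tangent_fix (X U : Matrix (Fin n) (Fin r) ℝ)
    (h : Xᵀ * U + Uᵀ * X = 0) : projT X U = U := by
  rw [projT, h, Matrix.mul_zero, smul_zero, sub_zero]

lemma projT_tangent (X Y : Matrix (Fin n) (Fin r) ℝ) (hX : Xᵀ * X = 1) :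
    Xᵀ * projT X Y + (projT X Y)ᵀ * X = 0 := by
  have hs : (Xᵀ * Y + Yᵀ * X)ᵀ = Xᵀ * Y + Yᵀ * X := by
    rw [Matrix.transpose_add, Matrix.transpose_mul, Matrix.transpose_mul,
      Matrix.transpose_transpose, Matrix.transpose_transpose, add_comm]
  rw [projT, Matrix.transpose_sub, Matrix.mul_sub, Matrix.sub_mul,
    Matrix.transpose_smul, Matrix.mul_smul, Matrix.smul_mul]
  rw [← Matrix.mul_assoc, hX, Matrix.one_mul]
  rw [Matrix.transpose_mul, hs, Matrix.mul_assoc, hX, Matrix.mul_one]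
  rw [sub_add_sub_comm, ← add_smul]
  norm_num

lemma projT_idem (X Y : Matrix (Fin n) (Fin r) ℝ) (hX : Xᵀ * X = 1) :
    projT X (projT X Y) = projT X Y :=
  projT_tangent_fix _ _ (projT_tangent X Y hX)

lemma frob_projT_le (X Y : Matrix (Fin n) (Fin r) ℝ) (hX : Xᵀ * X = 1) :
    frob (projT X Y) ≤ frob Y := by
  rcases eq_or_lt_of_le (frob_nonneg (projT X Y)) with h0 | h0
  · rw [← h0]; exact frob_nonneg Y
  · have h1 : frob (projT X Y) ^ 2 = innerF (projT X Y) (projT X Y) := frob_sq _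
    have h2 : innerF (projT X Y) (projT X Y)
        = innerF (projT X (projT X Y)) Y := projT_selfadj X Y (projT X Y)
    rw [projT_idem X Y hX] at h2
    have h3 : innerF (projT X Y) Y ≤ frob (projT X Y) * frob Y :=
      innerF_le_frob_mul_frob _ _
    have h4 : frob (projT X Y) ^ 2 ≤ frob (projT X Y) * frob Y := by
      rw [h1, h2]; exact h3
    rw [sq] at h4
    exact le_of_mul_le_mul_left h4 h0

lemma frob_projT_sq_le (X Y : Matrix (Fin n) (Fin r) ℝ) (hX : Xᵀ * X = 1) :
    frob (projT X Y) ^ 2 ≤ frob Y ^ 2 :=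
  pow_le_pow_left₀ (frob_nonneg _) (frob_projT_le X Y hX) 2

lemma projT_sub_of_stiefel (X Z : Matrix (Fin n) (Fin r) ℝ)
    (hX : Xᵀ * X = 1) (hZ : Zᵀ * Z = 1) :
    projT X (X - Z) = (X - Z) - (1 / 2 : ℝ) • (X * ((X - Z)ᵀ * (X - Z))) := by
  rw [projT]
  congr 2
  simp only [Matrix.transpose_sub, Matrix.sub_mul, Matrix.mul_sub, hX, hZ,
    Matrix.mul_add, Matrix.mul_one, Matrix.mul_smul, Matrix.mul_neg]
  abel

lemma frob_mul_sq_le {m : ℕ} (A : Matrix (Fin n) (Fin m) ℝ) (B : Matrix (Fin m) (Fin r) ℝ) :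
    frob (A * B) ^ 2 ≤ frob A ^ 2 * frob B ^ 2 := by
  rw [frob_sq, frob_sq, frob_sq, innerF_self, innerF_self, innerF_self]
  have key : ∀ a c, ((A * B) a c) ^ 2 ≤ (∑ b, (A a b) ^ 2) * (∑ b, (B b c) ^ 2) := by
    intro a c
    rw [Matrix.mul_apply]
    exact Finset.sum_mul_sq_le_sq_mul_sq Finset.univ _ _
  calc ∑ a, ∑ c, ((A * B) a c) ^ 2
      ≤ ∑ a, ∑ c, (∑ b, (A a b) ^ 2) * (∑ b, (B b c) ^ 2) :=
        Finset.sum_le_sum fun a _ => Finset.sum_le_sum fun c _ => key a c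
    _ = (∑ a, ∑ b, (A a b) ^ 2) * (∑ b, ∑ c, (B b c) ^ 2) := by
        rw [Finset.sum_mul]
        congr 1; funext a
        rw [← Finset.mul_sum]
        congr 1
        exact Finset.sum_comm

lemma trace_quad (A B : Matrix (Fin n) (Fin r) ℝ) :
    ((Aᵀ * A) * (Bᵀ * B)).trace = frob (A * Bᵀ) ^ 2 := by
  rw [frob_sq, innerF]
  rw [Matrix.transpose_mul, Matrix.transpose_transpose]
  calc ((Aᵀ * A) * (Bᵀ * B)).trace = ((Aᵀ * (A * Bᵀ)) * B).trace := by
        rw [Matrix.mul_assoc, Matrix.mul_assoc, Matrix.mul_assoc]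
    _ = (B * (Aᵀ * (A * Bᵀ))).trace := Matrix.trace_mul_comm _ _
    _ = ((B * Aᵀ) * (A * Bᵀ)).trace := by rw [Matrix.mul_assoc]

lemma innerF_XD (X Y : Matrix (Fin n) (Fin r) ℝ) (D : Matrix (Fin r) (Fin r) ℝ)
    (hD : Dᵀ = D) (hX : Xᵀ * X = 1) (hY : Yᵀ * Y = 1) :
    innerF (X * D) (X - Y) = (1 / 2 : ℝ) * (D * ((X - Y)ᵀ * (X - Y))).trace := by
  have hE : (X - Y)ᵀ * (X - Y) = 1 - Xᵀ * Y + (1 - Yᵀ * X) := by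
    rw [Matrix.transpose_sub, Matrix.sub_mul, Matrix.mul_sub, Matrix.mul_sub, hX, hY]
    abel
  have hsw : (D * (Yᵀ * X)).trace = (D * (Xᵀ * Y)).trace := by
    have h1 : (D * (Yᵀ * X)).trace = ((D * (Yᵀ * X))ᵀ).trace := (Matrix.trace_transpose _).symm
    rw [h1, Matrix.transpose_mul, Matrix.transpose_mul, Matrix.transpose_transpose, hD,
      Matrix.trace_mul_comm]
  have hL : innerF (X * D) (X - Y) = (D * (1 - Xᵀ * Y)).trace := by
    rw [innerF, Matrix.transpose_mul, hD, Matrix.mul_assoc]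
    rw [Matrix.mul_sub, Matrix.mul_sub, Matrix.mul_sub, Matrix.mul_one,
      ← Matrix.mul_assoc, ← Matrix.mul_assoc, Matrix.mul_assoc D Xᵀ X,
      Matrix.mul_assoc D Xᵀ Y, hX, Matrix.mul_one]
  rw [hL, hE]
  simp only [Matrix.mul_add, Matrix.mul_sub, Matrix.mul_one, Matrix.trace_add,
    Matrix.trace_sub, hsw]
  ring

section Spectral
variable {N : ℕ}

lemma rayleigh_val (A : Matrix (Fin N) (Fin N) ℝ) (x y : EuclideanSpace ℝ (Fin N)) :
    (inner ℝ x (Matrix.toEuclideanLin A y) : ℝ) = ∑ i, x i * (A *ᵥ (y : Fin N → ℝ)) i := by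
  simp [Matrix.toEuclideanLin_apply, PiLp.inner_apply, RCLike.inner_apply, conj_trivial]
  exact Finset.sum_congr rfl fun i _ => mul_comm _ _

lemma norm_one_sum_sq {x : EuclideanSpace ℝ (Fin N)} (hx : ‖x‖ = 1) :
    ∑ i, (x i) ^ 2 = 1 := by
  have := EuclideanSpace.norm_eq x
  rw [hx] at this
  have h2 : (1 : ℝ) = Real.sqrt (∑ i, ‖x i‖ ^ 2) := this
  have h3 : ∑ i, ‖x i‖ ^ 2 = ∑ i, (x i) ^ 2 := by
    congr 1; funext i; rw [Real.norm_eq_abs, sq_abs]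
  nlinarith [Real.sq_sqrt (show (0:ℝ) ≤ ∑ i, ‖x i‖ ^ 2 from
    Finset.sum_nonneg fun i _ => sq_nonneg _), h2, h3]

lemma coord_abs_le_one {x : EuclideanSpace ℝ (Fin N)} (hx : ‖x‖ = 1) (i : Fin N) :
    |x i| ≤ 1 := by
  have h1 : (x i) ^ 2 ≤ 1 := by
    rw [← norm_one_sum_sq hx]
    exact Finset.single_le_sum (fun j _ => sq_nonneg (x j)) (Finset.mem_univ i)
  nlinarith [abs_nonneg (x i), sq_abs (x i)]

lemma rayleigh_bddBelow (A : Matrix (Fin N) (Fin N) ℝ) :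
    BddBelow {c : ℝ | ∃ x : EuclideanSpace ℝ (Fin N), ‖x‖ = 1 ∧
      c = inner ℝ x (Matrix.toEuclideanLin A x)} := by
  refine ⟨-(∑ i, ∑ j, |A i j|), ?_⟩
  rintro c ⟨x, hx, rfl⟩
  rw [rayleigh_val]
  have key : ∀ i, -(∑ j, |A i j|) ≤ x i * (A *ᵥ (x : Fin N → ℝ)) i := by
    intro i
    have : x i * (A *ᵥ (x : Fin N → ℝ)) i = ∑ j, x i * (A i j * x j) := by
      rw [Matrix.mulVec, dotProduct, Finset.mul_sum]
    rw [this, ← Finset.sum_neg_distrib]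
    refine Finset.sum_le_sum fun j _ => ?_
    have h1 : |x i * (A i j * x j)| ≤ |A i j| := by
      rw [abs_mul, abs_mul]
      calc |x i| * (|A i j| * |x j|) ≤ 1 * (|A i j| * 1) := by
            apply mul_le_mul (coord_abs_le_one hx i) ?_ ?_ zero_le_one
            · exact mul_le_mul_of_nonneg_left (coord_abs_le_one hx j) (abs_nonneg _)
            · positivity
        _ = |A i j| := by ring
    linarith [neg_abs_le (x i * (A i j * x j))]
  calc -(∑ i, ∑ j, |A i j|) = ∑ i, -(∑ j, |A i j|) := by rw [Finset.sum_neg_distrib]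
    _ ≤ ∑ i, x i * (A *ᵥ (x : Fin N → ℝ)) i := Finset.sum_le_sum fun i _ => key i

lemma minEig_le_eigenvalue (A : Matrix (Fin N) (Fin N) ℝ) (hA : A.IsHermitian) (k : Fin N) :
    minEig A ≤ hA.eigenvalues k := by
  apply csInf_le (rayleigh_bddBelow A)
  refine ⟨hA.eigenvectorBasis k, hA.eigenvectorBasis.orthonormal.1 k, ?_⟩
  rw [rayleigh_val]
  have hmv : A *ᵥ ⇑(hA.eigenvectorBasis k) = hA.eigenvalues k • ⇑(hA.eigenvectorBasis k) :=
    hA.mulVec_eigenvectorBasis k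
  have hcast : (A *ᵥ ((hA.eigenvectorBasis k : EuclideanSpace ℝ (Fin N)) : Fin N → ℝ))
      = hA.eigenvalues k • ⇑(hA.eigenvectorBasis k) := hmv
  rw [hcast]
  have : ∑ i, hA.eigenvectorBasis k i * (hA.eigenvalues k • ⇑(hA.eigenvectorBasis k)) i
      = hA.eigenvalues k * ∑ i, (hA.eigenvectorBasis k i) ^ 2 := by
    rw [Finset.mul_sum]
    congr 1; funext i; simp [Pi.smul_apply, smul_eq_mul]; ring
  rw [this, norm_one_sum_sq (hA.eigenvectorBasis.orthonormal.1 k), mul_one]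

lemma abs_eig_le_one (A : Matrix (Fin N) (Fin N) ℝ) (hnn : ∀ i j, 0 ≤ A i j)
    (hrow : ∀ i, ∑ j, A i j = 1) {lam : ℝ} {u : Fin N → ℝ} (hu : u ≠ 0)
    (heq : A *ᵥ u = lam • u) : |lam| ≤ 1 := by
  obtain ⟨i0, hi0⟩ : ∃ i, u i ≠ 0 := by
    by_contra h
    push_neg at h
    exact hu (funext fun i => h i)
  obtain ⟨i, -, hi⟩ := Finset.exists_max_image Finset.univ (fun j => |u j|)
    ⟨i0, Finset.mem_univ i0⟩
  have hui : 0 < |u i| := lt_of_lt_of_le (abs_pos.mpr hi0) (hi i0 (Finset.mem_univ i0))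
  have hb : |lam| * |u i| ≤ 1 * |u i| := by
    rw [← abs_mul, one_mul]
    have h1 : lam * u i = (A *ᵥ u) i := by rw [heq]; simp [Pi.smul_apply, smul_eq_mul]
    rw [h1]
    have h2 : |(A *ᵥ u) i| ≤ ∑ j, A i j * |u j| := by
      rw [Matrix.mulVec, dotProduct]
      refine le_trans (Finset.abs_sum_le_sum_abs _ _) (Finset.sum_le_sum fun j _ => ?_)
      rw [abs_mul, abs_of_nonneg (hnn i j)]
    have h3 : ∑ j, A i j * |u j| ≤ ∑ j, A i j * |u i| :=
      Finset.sum_le_sum fun j _ =>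
        mul_le_mul_of_nonneg_left (hi j (Finset.mem_univ j)) (hnn i j)
    have h4 : ∑ j, A i j * |u i| = |u i| := by rw [← Finset.sum_mul, hrow, one_mul]
    linarith
  exact le_of_mul_le_mul_right hb hui

lemma spec_quad_ineq (A : Matrix (Fin N) (Fin N) ℝ) (hA : A.IsHermitian)
    (hnn : ∀ i j, 0 ≤ A i j) (hrow : ∀ i, ∑ j, A i j = 1) (v : Fin N → ℝ) :
    ∑ i, (v i - (A *ᵥ v) i) ^ 2 ≤ (1 - minEig A) * ∑ i, v i * (v i - (A *ᵥ v) i) := by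
  classical
  have hsym : ∀ i j, A i j = A j i := by
    intro i j
    conv_lhs => rw [← hA]
    simp [Matrix.conjTranspose_apply]
  set b := hA.eigenvectorBasis with hb
  set lam := hA.eigenvalues with hlam
  -- Parseval in coordinates
  have F1 : ∀ w z : Fin N → ℝ, ∑ i, w i * z i
      = ∑ k, (∑ i, b k i * w i) * (∑ i, b k i * z i) := by
    intro w z
    have hW : ∀ w : Fin N → ℝ, ∀ k,
        (inner ℝ ((WithLp.equiv 2 (Fin N → ℝ)).symm w) (b k) : ℝ) = ∑ i, w i * b k i := by
      intro w k
      simp [PiLp.inner_apply, RCLike.inner_apply, conj_trivial]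
      exact Finset.sum_congr rfl fun i _ => mul_comm _ _
    have hW2 : ∀ w : Fin N → ℝ, ∀ k,
        (inner ℝ (b k) ((WithLp.equiv 2 (Fin N → ℝ)).symm w) : ℝ) = ∑ i, b k i * w i := by
      intro w k
      simp [PiLp.inner_apply, RCLike.inner_apply, conj_trivial]
      exact Finset.sum_congr rfl fun i _ => mul_comm _ _
    have hP := b.sum_inner_mul_inner ((WithLp.equiv 2 (Fin N → ℝ)).symm w)
      ((WithLp.equiv 2 (Fin N → ℝ)).symm z)
    have hIP : (inner ℝ ((WithLp.equiv 2 (Fin N → ℝ)).symm w)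
        ((WithLp.equiv 2 (Fin N → ℝ)).symm z) : ℝ) = ∑ i, w i * z i := by
      simp [PiLp.inner_apply, RCLike.inner_apply, conj_trivial]
      exact Finset.sum_congr rfl fun i _ => mul_comm _ _
    rw [← hIP, ← hP]
    congr 1; funext k
    rw [hW w k, hW2 z k]
    congr 1
    congr 1; funext i; ring
  -- eigen-action on coefficients
  have F2 : ∀ k, ∑ i, b k i * (A *ᵥ v) i = lam k * ∑ i, b k i * v i := by
    intro k
    have hmv : A *ᵥ ⇑(b k) = lam k • ⇑(b k) := hA.mulVec_eigenvectorBasis k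
    calc ∑ i, b k i * (A *ᵥ v) i = ∑ i, ∑ j, b k i * (A i j * v j) := by
          congr 1; funext i
          rw [Matrix.mulVec, dotProduct, Finset.mul_sum]
      _ = ∑ j, (∑ i, A j i * b k i) * v j := by
          rw [Finset.sum_comm]
          congr 1; funext j
          rw [Finset.sum_mul]
          congr 1; funext i
          rw [hsym i j]; ring
      _ = ∑ j, (lam k * b k j) * v j := by
          congr 1; funext j
          congr 1
          have : (A *ᵥ ⇑(b k)) j = lam k * b k j := by rw [hmv]; simp
          rw [← this, Matrix.mulVec, dotProduct]
      _ = lam k * ∑ i, b k i * v i := by rw [Finset.mul_sum]; congr 1; funext j; ring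
  -- coefficients
  set d : Fin N → ℝ := fun k => ∑ i, b k i * v i with hd
  have hc : ∀ k, ∑ i, b k i * (v i - (A *ᵥ v) i) = (1 - lam k) * d k := by
    intro k
    have : ∑ i, b k i * (v i - (A *ᵥ v) i)
        = ∑ i, b k i * v i - ∑ i, b k i * (A *ᵥ v) i := by
      rw [← Finset.sum_sub_distrib]
      congr 1; funext i; ring
    rw [this, F2 k, hd]; ring
  have hLHS : ∑ i, (v i - (A *ᵥ v) i) ^ 2 = ∑ k, ((1 - lam k) * d k) ^ 2 := by
    have := F1 (fun i => v i - (A *ᵥ v) i) (fun i => v i - (A *ᵥ v) i)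
    simp only [← sq] at this
    rw [this]
    congr 1; funext k
    rw [hc k]
  have hRHS : ∑ i, v i * (v i - (A *ᵥ v) i) = ∑ k, (1 - lam k) * d k ^ 2 := by
    have := F1 v (fun i => v i - (A *ᵥ v) i)
    rw [this]
    congr 1; funext k
    rw [hc k]; ring
  rw [hLHS, hRHS, Finset.mul_sum]
  refine Finset.sum_le_sum fun k _ => ?_
  have h1 : lam k ≤ 1 := by
    have := abs_eig_le_one A hnn hrow ((WithLp.ofLp_eq_zero 2).ne.2 (hA.eigenvectorBasis.orthonormal.ne_zero k))
      (hA.mulVec_eigenvectorBasis k)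
    have habs := abs_le.mp this
    exact habs.2
  have h2 : minEig A ≤ lam k := minEig_le_eigenvalue A hA k
  have h3 : (0:ℝ) ≤ d k ^ 2 := sq_nonneg _
  have h4 : 0 ≤ (lam k - minEig A) * (1 - lam k) * d k ^ 2 :=
    mul_nonneg (mul_nonneg (sub_nonneg.mpr h2) (sub_nonneg.mpr h1)) h3
  nlinarith [h4]

end Spectral

lemma innerF_smul_left (c : ℝ) (A B : Matrix (Fin n) (Fin r) ℝ) :
    innerF (c • A) B = c * innerF A B := by
  rw [innerF_comm, innerF_smul_right, innerF_comm]

lemma frob_transpose (A : Matrix (Fin n) (Fin r) ℝ) : frob Aᵀ = frob A := by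
  rw [frob, frob]
  congr 1
  rw [Finset.sum_comm]
  exact Finset.sum_congr rfl fun a _ => Finset.sum_congr rfl fun b _ => rfl

lemma frob_sq_sum (A : Matrix (Fin n) (Fin r) ℝ) : frob A ^ 2 = ∑ a, ∑ b, (A a b) ^ 2 := by
  rw [frob_sq, innerF_self]

lemma innerF_paral (U V Z : Matrix (Fin n) (Fin r) ℝ) :
    innerF (U - Z) (U - V) + innerF (V - Z) (V - U) = innerF (U - V) (U - V) := by
  rw [innerF_eq_sum, innerF_eq_sum, innerF_eq_sum, ← Finset.sum_add_distrib]
  refine Finset.sum_congr rfl fun a _ => ?_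
  rw [← Finset.sum_add_distrib]
  refine Finset.sum_congr rfl fun b _ => ?_
  simp only [Matrix.sub_apply]
  ring

lemma pow_doubly {N' : ℕ} (W : Matrix (Fin N') (Fin N') ℝ)
    (hnonneg : ∀ i j, 0 ≤ W i j) (hrow : ∀ i, ∑ j, W i j = 1) (t : ℕ) :
    (∀ i j, 0 ≤ (W ^ t) i j) ∧ (∀ i, ∑ j, (W ^ t) i j = 1) := by
  induction t with
  | zero =>
      constructor
      · intro i j
        rw [pow_zero]
        by_cases h : i = j <;> simp [Matrix.one_apply, h]
      · intro i
        simp [pow_zero, Matrix.one_apply]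
  | succ m ih =>
      constructor
      · intro i j
        rw [pow_succ, Matrix.mul_apply]
        exact Finset.sum_nonneg fun k _ => mul_nonneg (ih.1 i k) (hnonneg k j)
      · intro i
        rw [pow_succ]
        have e1 : ∑ j, (W ^ m * W) i j = ∑ j, ∑ k, (W ^ m) i k * W k j := by
          simp [Matrix.mul_apply]
        rw [e1, Finset.sum_comm]
        have e2 : ∑ k, ∑ j, (W ^ m) i k * W k j = ∑ k, (W ^ m) i k := by
          congr 1; funext k
          rw [← Finset.mul_sum, hrow k, mul_one]
        rw [e2, ih.2 i]

lemma sum_comm3 {N' : ℕ} (f : Fin N' → Fin n → Fin r → ℝ) :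
    ∑ i, ∑ a, ∑ b, f i a b = ∑ a, ∑ b, ∑ i, f i a b := by
  rw [Finset.sum_comm]
  congr 1; funext a
  rw [Finset.sum_comm]

end Aux

/-- restricted secant-type inequality for the consensus potential in the local
region `𝒮`: with `Φ = 2 − max_i ‖X_i − X̂‖_F² ≥ 1`,
`Σ_i ⟨X_i − X̂, grad h_{i,t}(𝐗)⟩ ≥ (Φ/(2L_t)) Σ_i ‖grad h_{i,t}(𝐗)‖_F²`. -/
theorem consensus_gradient_secant_inequality {n r N : ℕ}
    (W : Matrix (Fin N) (Fin N) ℝ)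
    (hsymm : W.IsSymm) (hnonneg : ∀ i j, 0 ≤ W i j)
    (hrow : ∀ i, ∑ j, W i j = 1) (hcol : ∀ j, ∑ i, W i j = 1)
    (hconn : (commGraph W).Connected)
    (t : ℕ) (ht : 1 ≤ t) (Lt : ℝ) (hLt : Lt = 1 - minEig (W ^ t))
    (δ₁ δ₂ : ℝ) (hδ₂ : δ₂ ≤ 1 / 6) (hδ₁ : δ₁ ≤ δ₂ / (5 * Real.sqrt r))
    (Xs : Fin N → Matrix (Fin n) (Fin r) ℝ)
    (Xhat : Matrix (Fin n) (Fin r) ℝ) (hXhat : IsIAM Xs Xhat)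
    (hS : inS δ₁ δ₂ Xs Xhat)
    (Φ : ℝ) (hΦ : Φ = 2 - sSup {c | ∃ i, c = frob (Xs i - Xhat) ^ 2}) :
    ∑ i, innerF (Xs i - Xhat) (gradh W t Xs i) ≥
      Φ / (2 * Lt) * ∑ i, frob (gradh W t Xs i) ^ 2 := by
  classical
  have hNE : Nonempty (Fin N) := hconn.nonempty
  obtain ⟨i0⟩ := hNE
  have hSt : ∀ i, (Xs i)ᵀ * Xs i = 1 := fun i => hS.1 i
  have hStH : Xhatᵀ * Xhat = 1 := hXhat.1
  set A : Matrix (Fin N) (Fin N) ℝ := W ^ t with hA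
  have hAt : Aᵀ = A := (hsymm.pow t)
  have hAsym : ∀ i j, A i j = A j i := by
    intro i j
    conv_lhs => rw [← hAt]
    rfl
  have hAnnrow : (∀ i j, 0 ≤ A i j) ∧ (∀ i, ∑ j, A i j = 1) := by
    rw [hA]
    exact Aux.pow_doubly W hnonneg hrow t
  have hAnn : ∀ i j, 0 ≤ A i j := hAnnrow.1
  have hArow : ∀ i, ∑ j, A i j = 1 := hAnnrow.2
  have hAcol : ∀ j, ∑ i, A i j = 1 := by
    intro j
    have : ∑ i, A i j = ∑ i, A j i := by
      congr 1; funext i; exact hAsym i j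
    rw [this, hArow j]
  have hAherm : A.IsHermitian := by
    rw [Matrix.IsHermitian, Matrix.conjTranspose_eq_transpose_of_trivial, hAt]
  -- the Euclidean gradient
  set G : Fin N → Matrix (Fin n) (Fin r) ℝ := fun i => Xs i - ∑ j, A i j • Xs j with hG
  have hgrad : ∀ i, gradh W t Xs i = projT (Xs i) (G i) := fun i => rfl
  have hGalt : ∀ i, G i = ∑ j, A i j • (Xs i - Xs j) := by
    intro i
    have e : ∑ j, A i j • (Xs i - Xs j) = (∑ j, A i j) • Xs i - ∑ j, A i j • Xs j := by
      rw [Finset.sum_smul]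
      rw [← Finset.sum_sub_distrib]
      congr 1; funext j
      rw [smul_sub]
    rw [hG, e, hArow i, one_smul]
  -- the quadratic potential (4 times h_t)
  set q : ℝ := ∑ i, ∑ j, A i j * frob (Xs i - Xs j) ^ 2 with hq
  have hqnn : 0 ≤ q :=
    Finset.sum_nonneg fun i _ => Finset.sum_nonneg fun j _ =>
      mul_nonneg (hAnn i j) (sq_nonneg _)
  -- the sSup bound
  set s : ℝ := sSup {c | ∃ i, c = frob (Xs i - Xhat) ^ 2} with hs
  have hbdd : BddAbove {c | ∃ i, c = frob (Xs i - Xhat) ^ 2} := by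
    refine ⟨δ₂ ^ 2, ?_⟩
    rintro c ⟨i, rfl⟩
    exact pow_le_pow_left₀ (Aux.frob_nonneg _) (hS.2.2 i) 2
  have hmem : ∀ i, frob (Xs i - Xhat) ^ 2 ≤ s :=
    fun i => le_csSup hbdd ⟨i, rfl⟩
  have hsle : s ≤ δ₂ ^ 2 := by
    refine csSup_le ⟨frob (Xs i0 - Xhat) ^ 2, i0, rfl⟩ ?_
    rintro c ⟨i, rfl⟩
    exact pow_le_pow_left₀ (Aux.frob_nonneg _) (hS.2.2 i) 2
  have hd2nn : 0 ≤ δ₂ := le_trans (Aux.frob_nonneg _) (hS.2.2 i0)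
  have hΦnn : 0 ≤ Φ := by
    have h36 : δ₂ ^ 2 ≤ (1/6 : ℝ) ^ 2 := pow_le_pow_left₀ hd2nn hδ₂ 2
    rw [hΦ]
    nlinarith
  have hΦs : s = 2 - Φ := by rw [hΦ]; ring
  -- Step A : ∑ ⟨Xhat, G i⟩ = 0
  have hStepA : ∑ i, innerF Xhat (G i) = 0 := by
    have e1 : ∀ i, innerF Xhat (G i)
        = innerF Xhat (Xs i) - ∑ j, A i j * innerF Xhat (Xs j) := by
      intro i
      rw [hG]
      rw [Aux.innerF_sub_right, Aux.innerF_sum_right]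
      congr 1
      exact Finset.sum_congr rfl fun j _ => Aux.innerF_smul_right _ _ _
    have e2 : ∑ i, ∑ j, A i j * innerF Xhat (Xs j) = ∑ j, innerF Xhat (Xs j) := by
      rw [Finset.sum_comm]
      congr 1; funext j
      rw [← Finset.sum_mul, hAcol j, one_mul]
    calc ∑ i, innerF Xhat (G i)
        = ∑ i, (innerF Xhat (Xs i) - ∑ j, A i j * innerF Xhat (Xs j)) := by
          exact Finset.sum_congr rfl fun i _ => e1 i
      _ = ∑ i, innerF Xhat (Xs i) - ∑ i, ∑ j, A i j * innerF Xhat (Xs j) := by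
          rw [Finset.sum_sub_distrib]
      _ = 0 := by rw [e2]; ring
  -- Step B : ∑ ⟨Xs i - Xhat, G i⟩ = q / 2
  have hTdef : ∀ i, innerF (Xs i - Xhat) (G i)
      = ∑ j, A i j * innerF (Xs i - Xhat) (Xs i - Xs j) := by
    intro i
    rw [hGalt i, Aux.innerF_sum_right]
    exact Finset.sum_congr rfl fun j _ => Aux.innerF_smul_right _ _ _
  have hswapT : (∑ i, ∑ j, A i j * innerF (Xs i - Xhat) (Xs i - Xs j))
      = ∑ i, ∑ j, A i j * innerF (Xs j - Xhat) (Xs j - Xs i) := by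
    rw [Finset.sum_comm]
    exact Finset.sum_congr rfl fun i _ => Finset.sum_congr rfl fun j _ => by
      rw [hAsym]
  have hStepB : ∑ i, innerF (Xs i - Xhat) (G i) = q / 2 := by
    have e1 : ∑ i, innerF (Xs i - Xhat) (G i)
        = ∑ i, ∑ j, A i j * innerF (Xs i - Xhat) (Xs i - Xs j) :=
      Finset.sum_congr rfl fun i _ => hTdef i
    have e2 : (∑ i, ∑ j, A i j * innerF (Xs i - Xhat) (Xs i - Xs j)) * 2 = q := by
      have : (∑ i, ∑ j, A i j * innerF (Xs i - Xhat) (Xs i - Xs j)) * 2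
          = (∑ i, ∑ j, A i j * innerF (Xs i - Xhat) (Xs i - Xs j))
            + ∑ i, ∑ j, A i j * innerF (Xs j - Xhat) (Xs j - Xs i) := by
        rw [← hswapT]; ring
      rw [this, hq, ← Finset.sum_add_distrib]
      refine Finset.sum_congr rfl fun i _ => ?_
      rw [← Finset.sum_add_distrib]
      refine Finset.sum_congr rfl fun j _ => ?_
      rw [← mul_add, Aux.frob_sq, ← Aux.innerF_paral (Xs i) (Xs j) Xhat]
    rw [e1]
    linarith [e2]
  -- Step C : ∑ ⟨Xs i, G i⟩ = q / 2
  have hStepC : ∑ i, innerF (Xs i) (G i) = q / 2 := by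
    have e1 : ∀ i, innerF (Xs i - Xhat) (G i) = innerF (Xs i) (G i) - innerF Xhat (G i) :=
      fun i => Aux.innerF_sub_left _ _ _
    have : ∑ i, innerF (Xs i - Xhat) (G i)
        = ∑ i, innerF (Xs i) (G i) - ∑ i, innerF Xhat (G i) := by
      rw [← Finset.sum_sub_distrib]
      exact Finset.sum_congr rfl fun i _ => e1 i
    rw [hStepB, hStepA] at this
    linarith
  -- Step D : the projected LHS identity and lower bound
  have hDsym : ∀ i, ((Xs i - Xhat)ᵀ * (Xs i - Xhat))ᵀ = (Xs i - Xhat)ᵀ * (Xs i - Xhat) := by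
    intro i
    rw [Matrix.transpose_mul, Matrix.transpose_transpose]
  have hproj : ∀ i, innerF (Xs i - Xhat) (gradh W t Xs i)
      = innerF (Xs i - Xhat) (G i)
        - (1/2 : ℝ) * innerF (Xs i * ((Xs i - Xhat)ᵀ * (Xs i - Xhat))) (G i) := by
    intro i
    rw [hgrad i, Aux.projT_selfadj, Aux.projT_sub_of_stiefel _ _ (hSt i) hStH,
      Aux.innerF_sub_left, Aux.innerF_smul_left]
  -- bound on correction term
  have hcorr : ∀ i j, innerF (Xs i * ((Xs i - Xhat)ᵀ * (Xs i - Xhat))) (Xs i - Xs j)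
      ≤ (1/2 : ℝ) * (s * frob (Xs i - Xs j) ^ 2) := by
    intro i j
    rw [Aux.innerF_XD _ _ _ (hDsym i) (hSt i) (hSt j)]
    rw [Aux.trace_quad]
    have h1 : frob ((Xs i - Xhat) * (Xs i - Xs j)ᵀ) ^ 2
        ≤ frob (Xs i - Xhat) ^ 2 * frob ((Xs i - Xs j)ᵀ) ^ 2 := Aux.frob_mul_sq_le _ _
    rw [Aux.frob_transpose] at h1
    have h2 : frob (Xs i - Xhat) ^ 2 * frob (Xs i - Xs j) ^ 2 ≤ s * frob (Xs i - Xs j) ^ 2 :=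
      mul_le_mul_of_nonneg_right (hmem i) (sq_nonneg _)
    nlinarith
  have hcorrsum : ∑ i, innerF (Xs i * ((Xs i - Xhat)ᵀ * (Xs i - Xhat))) (G i)
      ≤ (s / 2) * q := by
    have e1 : ∀ i, innerF (Xs i * ((Xs i - Xhat)ᵀ * (Xs i - Xhat))) (G i)
        = ∑ j, A i j * innerF (Xs i * ((Xs i - Xhat)ᵀ * (Xs i - Xhat))) (Xs i - Xs j) := by
      intro i
      rw [hGalt i, Aux.innerF_sum_right]
      exact Finset.sum_congr rfl fun j _ => Aux.innerF_smul_right _ _ _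
    calc ∑ i, innerF (Xs i * ((Xs i - Xhat)ᵀ * (Xs i - Xhat))) (G i)
        = ∑ i, ∑ j, A i j * innerF (Xs i * ((Xs i - Xhat)ᵀ * (Xs i - Xhat))) (Xs i - Xs j) :=
          Finset.sum_congr rfl fun i _ => e1 i
      _ ≤ ∑ i, ∑ j, A i j * ((1/2 : ℝ) * (s * frob (Xs i - Xs j) ^ 2)) :=
          Finset.sum_le_sum fun i _ => Finset.sum_le_sum fun j _ =>
            mul_le_mul_of_nonneg_left (hcorr i j) (hAnn i j)
      _ = (s / 2) * q := by
          rw [hq, Finset.mul_sum]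
          refine Finset.sum_congr rfl fun i _ => ?_
          rw [Finset.mul_sum]
          refine Finset.sum_congr rfl fun j _ => ?_
          ring
  -- lower bound for the LHS
  have hLHS : ∑ i, innerF (Xs i - Xhat) (gradh W t Xs i) ≥ Φ * q / 4 := by
    have e1 : ∑ i, innerF (Xs i - Xhat) (gradh W t Xs i)
        = ∑ i, innerF (Xs i - Xhat) (G i)
          - (1/2 : ℝ) * ∑ i, innerF (Xs i * ((Xs i - Xhat)ᵀ * (Xs i - Xhat))) (G i) := by
      rw [Finset.mul_sum, ← Finset.sum_sub_distrib]
      exact Finset.sum_congr rfl fun i _ => hproj i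
    rw [e1, hStepB]
    have : (1/2 : ℝ) * ∑ i, innerF (Xs i * ((Xs i - Xhat)ᵀ * (Xs i - Xhat))) (G i)
        ≤ (1/2) * ((s / 2) * q) := by linarith [hcorrsum]
    rw [hΦs] at hcorrsum
    nlinarith [hcorrsum, hqnn]
  -- Step E : spectral upper bound for the gradient norms
  have hGab : ∀ i a b, G i a b
      = (fun k => Xs k a b) i - (A *ᵥ (fun k => Xs k a b)) i := by
    intro i a b
    rw [hG]
    simp [Matrix.sub_apply, Matrix.mulVec, dotProduct, Finset.sum_apply,
      Matrix.sum_apply, Matrix.smul_apply, smul_eq_mul]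
  have hspec : ∑ i, frob (G i) ^ 2 ≤ (1 - minEig A) * (q / 2) := by
    have e1 : ∑ i, frob (G i) ^ 2 = ∑ a, ∑ b, ∑ i, (G i a b) ^ 2 := by
      rw [← Aux.sum_comm3]
      exact Finset.sum_congr rfl fun i _ => Aux.frob_sq_sum _
    have e2 : ∑ i, innerF (Xs i) (G i) = ∑ a, ∑ b, ∑ i, Xs i a b * G i a b := by
      rw [← Aux.sum_comm3]
      exact Finset.sum_congr rfl fun i _ => Aux.innerF_eq_sum _ _
    have key : ∀ a b, ∑ i, (G i a b) ^ 2
        ≤ (1 - minEig A) * ∑ i, Xs i a b * G i a b := by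
      intro a b
      have hsq := Aux.spec_quad_ineq A hAherm hAnn hArow (fun k => Xs k a b)
      have eL : ∑ i, (G i a b) ^ 2
          = ∑ i, ((fun k => Xs k a b) i - (A *ᵥ (fun k => Xs k a b)) i) ^ 2 :=
        Finset.sum_congr rfl fun i _ => by rw [hGab i a b]
      have eR : ∑ i, Xs i a b * G i a b
          = ∑ i, (fun k => Xs k a b) i
            * ((fun k => Xs k a b) i - (A *ᵥ (fun k => Xs k a b)) i) :=
        Finset.sum_congr rfl fun i _ => by rw [hGab i a b]
      rw [eL, eR]
      exact hsq
    calc ∑ i, frob (G i) ^ 2 = ∑ a, ∑ b, ∑ i, (G i a b) ^ 2 := e1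
      _ ≤ ∑ a, ∑ b, (1 - minEig A) * ∑ i, Xs i a b * G i a b :=
          Finset.sum_le_sum fun a _ => Finset.sum_le_sum fun b _ => key a b
      _ = (1 - minEig A) * ∑ a, ∑ b, ∑ i, Xs i a b * G i a b := by
          rw [Finset.mul_sum]
          exact Finset.sum_congr rfl fun a _ => by rw [Finset.mul_sum]
      _ = (1 - minEig A) * (q / 2) := by rw [← e2, hStepC]
  have hgradle : ∑ i, frob (gradh W t Xs i) ^ 2 ≤ Lt * (q / 2) := by
    have e1 : ∑ i, frob (gradh W t Xs i) ^ 2 ≤ ∑ i, frob (G i) ^ 2 :=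
      Finset.sum_le_sum fun i _ => by
        rw [hgrad i]; exact Aux.frob_projT_sq_le _ _ (hSt i)
    rw [hLt]
    exact le_trans e1 hspec
  have hgradnn : 0 ≤ ∑ i, frob (gradh W t Xs i) ^ 2 :=
    Finset.sum_nonneg fun i _ => sq_nonneg _
  -- conclusion
  rcases le_or_gt Lt 0 with hL | hL
  · have hfac : Φ / (2 * Lt) ≤ 0 := by
      rcases eq_or_lt_of_le hL with h0 | h0
      · rw [h0]; simp
      · apply div_nonpos_of_nonneg_of_nonpos hΦnn
        linarith
    have : Φ / (2 * Lt) * ∑ i, frob (gradh W t Xs i) ^ 2 ≤ 0 :=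
      mul_nonpos_of_nonpos_of_nonneg hfac hgradnn
    have hq4 : 0 ≤ Φ * q / 4 := by
      have := mul_nonneg hΦnn hqnn
      linarith
    linarith [hLHS]
  · have hfacnn : 0 ≤ Φ / (2 * Lt) := div_nonneg hΦnn (by linarith)
    have h1 : Φ / (2 * Lt) * ∑ i, frob (gradh W t Xs i) ^ 2
        ≤ Φ / (2 * Lt) * (Lt * (q / 2)) :=
      mul_le_mul_of_nonneg_left hgradle hfacnn
    have h2 : Φ / (2 * Lt) * (Lt * (q / 2)) = Φ * q / 4 := by
      field_simp
      ring
    linarith [hLHS]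

end
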